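/- Let p ≥ 3 be an integer, β > 0 and λ > 0 be reals, and let Γ be a graph on m vertices with minimum degree at least (1 − 2/(2p−3) + β)·m and with at most (10p)^(−2p)·β·λ·m^p copies of K_p. Then there is a set of at most λ·m² edges of Γ whose deletion yields a K_p-free graph. -/

import Mathlib

open SimpleGraph

/-- `ContainsCopy G Γ` : `Γ` contains a (not necessarily induced) copy of `G`. -/
def ContainsCopy {α β : Type*} (G : SimpleGraph α) (Γ : SimpleGraph β) : Prop :=
  ∃ f : α → β, Function.Injective f ∧ ∀ ⦃a b⦄, G.Adj a b → Γ.Adj (f a) (f b)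

/-- The book graph `B_{k,n}`: `n` vertices, the first `k` of which form the spine. -/
def Book (k n : ℕ) : SimpleGraph (Fin n) :=
  SimpleGraph.fromRel (fun a b => (a : ℕ) < k ∨ (b : ℕ) < k)

/-- The Ramsey number `r(G,H)`: the least `N` such that every graph `Γ` on `N` vertices
contains a copy of `G`, or its complement contains a copy of `H`. -/
noncomputable def ramseyNumber {α β : Type*} (G : SimpleGraph α) (H : SimpleGraph β) : ℕ :=
  sInf {N | ∀ Γ : SimpleGraph (Fin N), ContainsCopy G Γ ∨ ContainsCopy H Γᶜ}

/-- The degree of a vertex. -/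
noncomputable def degCount {V : Type*} (Γ : SimpleGraph V) (v : V) : ℕ :=
  (Γ.neighborSet v).ncard

/-- The number of copies of `K_p` in `Γ`, i.e. sets of `p` pairwise adjacent vertices. -/
noncomputable def cliqueCount {V : Type*} (Γ : SimpleGraph V) (p : ℕ) : ℕ :=
  {s : Finset V | Γ.IsNClique p s}.ncard

/-- `Γ` contains an induced copy of the complete multipartite graph with all parts
of size `t`, with parts `P 0, …, P (r-1)`. -/
def IsCompleteMultipartiteIn {V : Type*} (Γ : SimpleGraph V) {r : ℕ} (t : ℕ)
    (P : Fin r → Finset V) : Prop :=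
  (∀ i, (P i).card = t) ∧
  (∀ i j, i ≠ j → Disjoint (P i) (P j)) ∧
  (∀ i, ∀ a ∈ P i, ∀ b ∈ P i, ¬ Γ.Adj a b) ∧
  (∀ i j, i ≠ j → ∀ a ∈ P i, ∀ b ∈ P j, Γ.Adj a b)

/-- The number of edges of `Γ` with both endpoints inside `s`. -/
noncomputable def edgesInside {V : Type*} (Γ : SimpleGraph V) (s : Finset V) : ℕ :=
  {e ∈ Γ.edgeSet | ∀ v ∈ e, v ∈ s}.ncard

open Finset
open scoped Classical

set_option linter.unusedSectionVars false
set_option maxHeartbeats 1000000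
noncomputable section CFW

variable {V : Type*} [Fintype V] [DecidableEq V] (Γ : SimpleGraph V)

def nbW (W : Finset V) (v : V) : Finset V := W.filter (fun x => Γ.Adj v x)

def cnW (W A : Finset V) : Finset V := W.filter (fun x => ∀ a ∈ A, Γ.Adj a x)

def KK (W : Finset V) (q : ℕ) : Finset (Finset V) :=
  W.powerset.filter (fun T => Γ.IsNClique q T)

def cnt (W : Finset V) (q : ℕ) (u v : V) : ℕ :=
  ((KK Γ W q).filter (fun T => u ∈ T ∧ v ∈ T)).card

def MinDegR (W : Finset V) (c : ℝ) : Prop :=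
  ∀ w ∈ W, c * (W.card : ℝ) ≤ ((nbW Γ W w).card : ℝ)

def cc (q : ℕ) : ℝ := 3 * ∏ j ∈ Finset.Icc 4 q, ((5 : ℝ) * (j : ℝ) ^ 2)⁻¹

lemma cc_three : cc 3 = 3 := by
  rw [cc, Finset.Icc_eq_empty (by omega), Finset.prod_empty, mul_one]

lemma cc_succ {q : ℕ} (hq : 3 ≤ q) : cc (q + 1) = cc q * ((5 : ℝ) * ((q : ℝ) + 1) ^ 2)⁻¹ := by
  rw [cc, cc, Finset.prod_Icc_succ_top (by omega), ← mul_assoc]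
  push_cast
  ring

lemma cc_pos (q : ℕ) : 0 < cc q := by
  have : 0 < ∏ j ∈ Finset.Icc 4 q, ((5 : ℝ) * (j : ℝ) ^ 2)⁻¹ := by
    apply Finset.prod_pos
    intro j hj
    have : 4 ≤ j := (Finset.mem_Icc.mp hj).1
    positivity
  rw [cc]; positivity

lemma cc_bound : ∀ q : ℕ, 3 ≤ q → ((q : ℝ)) ^ 4 ≤ cc q * (10 * (q : ℝ)) ^ (2 * q) := by
  intro q hq
  induction q, hq using Nat.le_induction with
  | base =>
      rw [cc_three]
      norm_num
  | succ q hq ih =>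
      have hq3 : (3 : ℝ) ≤ (q : ℝ) := by exact_mod_cast hq
      have hccq := cc_pos q
      have h1 : ((10 : ℝ) * q) ^ (2 * q) ≤ (10 * ((q : ℝ) + 1)) ^ (2 * q) := by
        apply pow_le_pow_left₀ (by positivity)
        linarith
      have key : (q : ℝ) ^ 4 ≤ cc q * (10 * ((q : ℝ) + 1)) ^ (2 * q) :=
        le_trans ih (mul_le_mul_of_nonneg_left h1 hccq.le)
      have hcast : (((q : ℕ) + 1 : ℕ) : ℝ) = (q : ℝ) + 1 := by push_cast; ring
      rw [cc_succ hq, hcast, show 2 * (q + 1) = 2 * q + 2 by ring, pow_add]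
      have h20 : cc q * ((5:ℝ) * ((q:ℝ)+1)^2)⁻¹ *
          ((10 * ((q : ℝ) + 1)) ^ (2 * q) * (10 * ((q : ℝ) + 1)) ^ 2)
          = (cc q * (10 * ((q : ℝ) + 1)) ^ (2 * q)) * 20 := by
        have hpos : ((q:ℝ)+1) ≠ 0 := by positivity
        field_simp
        ring
      rw [h20]
      nlinarith [key, sq_nonneg ((q:ℝ)-3), sq_nonneg ((q:ℝ)+1), sq_nonneg ((q:ℝ)*((q:ℝ)-3))]

lemma kappa_pow {q : ℕ} (hq : 3 ≤ q) :
    (1 / 3 : ℝ) ≤ ((2 * (q : ℝ) - 3) / (2 * (q : ℝ) - 1)) ^ (q - 2) := by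
  have hq3 : (3 : ℝ) ≤ (q : ℝ) := by exact_mod_cast hq
  have hb : (0:ℝ) < 2 * (q:ℝ) - 3 := by linarith
  have ha : (0:ℝ) < 2 * (q:ℝ) - 1 := by linarith
  set x : ℝ := 2 / (2 * (q:ℝ) - 3) with hx
  have hxpos : 0 < x := by positivity
  have hrw : (2 * (q : ℝ) - 1) / (2 * (q : ℝ) - 3) = 1 + x := by
    rw [hx]; field_simp; ring
  have h1 : ((2 * (q : ℝ) - 1) / (2 * (q : ℝ) - 3)) ^ (q - 2) ≤ 3 := by
    rw [hrw]
    have hle : (1 + x) ≤ Real.exp x := by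
      have := Real.add_one_le_exp x; linarith
    calc (1 + x) ^ (q - 2) ≤ (Real.exp x) ^ (q - 2) := by
          apply pow_le_pow_left₀ (by positivity) hle
      _ = Real.exp ((q - 2 : ℕ) * x) := by rw [Real.exp_nat_mul]
      _ ≤ Real.exp 1 := by
          apply Real.exp_le_exp.mpr
          have hcast : ((q - 2 : ℕ) : ℝ) = (q : ℝ) - 2 := by
            have h2 : 2 ≤ q := by omega
            push_cast [Nat.cast_sub h2]; ring
          rw [hcast, hx, mul_comm, div_mul_eq_mul_div, div_le_one hb]
          linarith
      _ ≤ 3 := by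
          have := Real.exp_one_lt_d9
          linarith
  have hinv : ((2 * (q : ℝ) - 3) / (2 * (q : ℝ) - 1)) ^ (q - 2)
      = (((2 * (q : ℝ) - 1) / (2 * (q : ℝ) - 3)) ^ (q - 2))⁻¹ := by
    rw [← inv_pow, inv_div]
  have hpow : (0:ℝ) < ((2 * (q : ℝ) - 1) / (2 * (q : ℝ) - 3)) ^ (q - 2) := by positivity
  rw [hinv, one_div]
  exact inv_anti₀ hpow h1

-- the per-step numeric inequality
lemma step_const {q : ℕ} (hq : 3 ≤ q) :
    cc (q + 1) * ((q:ℝ) - 1) ≤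
      (2 * (q:ℝ) - 4) / (((q:ℝ) + 1) * (2 * (q:ℝ) - 1)) * (1/3) * cc q := by
  have hq3 : (3 : ℝ) ≤ (q : ℝ) := by exact_mod_cast hq
  have hccq := cc_pos q
  rw [cc_succ hq]
  have hq1 : (0:ℝ) < (q:ℝ)+1 := by linarith
  have h2q1 : (0:ℝ) < 2*(q:ℝ)-1 := by linarith
  have hA : 5⁻¹ * ((((q:ℝ)+1))^2)⁻¹ * ((q:ℝ)-1) ≤
      (2*(q:ℝ)-4)/(((q:ℝ)+1)*(2*(q:ℝ)-1)) * (1/3) := by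
    have hL : (5:ℝ)⁻¹ * ((((q:ℝ)+1))^2)⁻¹ * ((q:ℝ)-1) = ((q:ℝ)-1)/(5*((q:ℝ)+1)^2) := by
      field_simp
    have hR : (2*(q:ℝ)-4)/(((q:ℝ)+1)*(2*(q:ℝ)-1)) * (1/3)
        = (2*(q:ℝ)-4)/(3*(((q:ℝ)+1)*(2*(q:ℝ)-1))) := by
      rw [div_mul_eq_mul_div, mul_one_div, div_div]
    rw [hL, hR, div_le_div_iff₀ (by positivity) (by positivity : (0:ℝ) < 3*(((q:ℝ)+1)*(2*(q:ℝ)-1)))]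
    nlinarith [sq_nonneg ((q:ℝ)-3), sq_nonneg ((q:ℝ)+1), mul_nonneg (sq_nonneg ((q:ℝ)-3)) (by linarith : (0:ℝ) ≤ (q:ℝ)+1)]
  calc cc q * ((5:ℝ) * ((q : ℝ) + 1) ^ 2)⁻¹ * ((q:ℝ) - 1)
      = cc q * (5⁻¹ * ((((q:ℝ)+1))^2)⁻¹ * ((q:ℝ)-1)) := by
        rw [mul_inv]; ring
    _ ≤ cc q * ((2*(q:ℝ)-4)/(((q:ℝ)+1)*(2*(q:ℝ)-1)) * (1/3)) :=
        mul_le_mul_of_nonneg_left hA hccq.le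
    _ = (2 * (q:ℝ) - 4) / (((q:ℝ) + 1) * (2 * (q:ℝ) - 1)) * (1/3) * cc q := by ring


-- counting lemmas, to append after p1 content
lemma nbW_subset (W : Finset V) (v : V) : nbW Γ W v ⊆ W := Finset.filter_subset _ _

lemma cnW_subset (W A : Finset V) : cnW Γ W A ⊆ W := Finset.filter_subset _ _

lemma swap_sum (W S : Finset V) :
    ∑ x ∈ W, ((S.filter (fun a => Γ.Adj a x)).card) = ∑ v ∈ S, ((nbW Γ W v).card) := by
  simp only [nbW, Finset.card_filter]
  rw [Finset.sum_comm]

lemma choose_lb {k d : ℕ} (hk : 1 ≤ k) (hd : d ≤ k + 1) :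
    (d:ℝ) - ((k:ℝ) - 1) ≤ (d.choose k : ℝ) := by
  rcases lt_or_ge d k with h | h
  · have h1 : (d:ℝ) + 1 ≤ (k:ℝ) := by exact_mod_cast h
    have h0 : (0:ℝ) ≤ (d.choose k : ℝ) := by positivity
    linarith
  · rcases Nat.eq_or_lt_of_le h with h2 | h2
    · rw [← h2, Nat.choose_self]
      push_cast
      linarith
    · have h3 : d = k + 1 := by omega
      subst h3
      rw [Nat.choose_succ_self_right]
      have : (1:ℝ) ≤ (k:ℝ) := by exact_mod_cast hk
      push_cast
      linarith

lemma claim1 {q : ℕ} (hq : 1 ≤ q) {δ : ℝ} (W S : Finset V) (hSW : S ⊆ W)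
    (hS : Γ.IsNClique (q+1) S)
    (hmin : ∀ v ∈ S, δ ≤ ((nbW Γ W v).card : ℝ)) :
    ∃ A ∈ S.powersetCard q,
      (((q:ℝ)+1) * δ - ((q:ℝ)-1) * (W.card:ℝ)) / ((q:ℝ)+1) ≤ ((cnW Γ W A).card : ℝ) := by
  have e1 : ∑ A ∈ S.powersetCard q, ((cnW Γ W A).card)
      = ∑ x ∈ W, ((S.filter (fun a => Γ.Adj a x)).card.choose q) := by
    simp only [cnW, Finset.card_filter]
    rw [Finset.sum_comm]
    apply Finset.sum_congr rfl
    intro x hx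
    rw [← Finset.card_filter]
    have hset : (S.powersetCard q).filter (fun A => ∀ a ∈ A, Γ.Adj a x)
        = (S.filter (fun a => Γ.Adj a x)).powersetCard q := by
      ext A
      simp only [Finset.mem_filter, Finset.mem_powersetCard]
      constructor
      · rintro ⟨⟨hAS, hcard⟩, hadj⟩
        exact ⟨fun a ha => Finset.mem_filter.mpr ⟨hAS ha, hadj a ha⟩, hcard⟩
      · rintro ⟨hsub, hcard⟩
        exact ⟨⟨fun a ha => (Finset.mem_filter.mp (hsub ha)).1, hcard⟩,
          fun a ha => (Finset.mem_filter.mp (hsub ha)).2⟩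
    rw [hset, Finset.card_powersetCard, Finset.card_filter]
  have hsum : ((q:ℝ)+1) * δ - ((q:ℝ)-1) * (W.card:ℝ)
      ≤ ∑ A ∈ S.powersetCard q, ((cnW Γ W A).card : ℝ) := by
    have e2 : ∀ x ∈ W, ((S.filter (fun a => Γ.Adj a x)).card : ℝ) - ((q:ℝ)-1)
        ≤ (((S.filter (fun a => Γ.Adj a x)).card.choose q : ℕ) : ℝ) := by
      intro x hx
      apply choose_lb hq
      calc (S.filter (fun a => Γ.Adj a x)).card ≤ S.card := Finset.card_filter_le _ _
        _ = q + 1 := hS.2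
    have e3 : ∑ x ∈ W, (((S.filter (fun a => Γ.Adj a x)).card : ℕ) : ℝ)
        = ∑ v ∈ S, ((nbW Γ W v).card : ℝ) := by
      have := swap_sum Γ W S
      exact_mod_cast this
    have e4 : ∑ A ∈ S.powersetCard q, ((cnW Γ W A).card : ℝ)
        = ∑ x ∈ W, (((S.filter (fun a => Γ.Adj a x)).card.choose q : ℕ) : ℝ) := by
      exact_mod_cast congrArg (Nat.cast (R := ℝ)) e1
    rw [e4]
    have e5 : ∑ x ∈ W, ((((S.filter (fun a => Γ.Adj a x)).card : ℕ) : ℝ) - ((q:ℝ)-1))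
        ≤ ∑ x ∈ W, (((S.filter (fun a => Γ.Adj a x)).card.choose q : ℕ) : ℝ) :=
      Finset.sum_le_sum e2
    have e6 : ∑ x ∈ W, ((((S.filter (fun a => Γ.Adj a x)).card : ℕ) : ℝ) - ((q:ℝ)-1))
        = (∑ v ∈ S, ((nbW Γ W v).card : ℝ)) - ((q:ℝ)-1) * (W.card:ℝ) := by
      rw [Finset.sum_sub_distrib, Finset.sum_const, e3, nsmul_eq_mul]
      ring
    have e7 : ((q:ℝ)+1) * δ ≤ ∑ v ∈ S, ((nbW Γ W v).card : ℝ) := by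
      have := Finset.sum_le_sum hmin
      rw [Finset.sum_const, hS.2, nsmul_eq_mul] at this
      push_cast at this
      linarith
    linarith
  by_contra hcon
  push_neg at hcon
  have hcard : (S.powersetCard q).card = q + 1 := by
    rw [Finset.card_powersetCard, hS.2, Nat.choose_succ_self_right]
  have hne : (S.powersetCard q).Nonempty := by
    rw [← Finset.card_pos, hcard]; omega
  have hlt := Finset.sum_lt_sum_of_nonempty hne hcon
  rw [Finset.sum_const, hcard, nsmul_eq_mul] at hlt
  have hq1 : ((q:ℝ)+1) ≠ 0 := by positivity
  rw [show ((q+1 : ℕ):ℝ) = (q:ℝ)+1 by push_cast; ring] at hlt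
  rw [mul_div_cancel₀ _ hq1] at hlt
  linarith

lemma descent {q : ℕ} (hq : 3 ≤ q) {β : ℝ} (hβ : 0 < β) (hβ2 : β ≤ 2 / (2*(q:ℝ) - 3))
    (W : Finset V) (H2 : MinDegR Γ W (1 - 2/(2*(q:ℝ)-1) + β)) {y : V} (hy : y ∈ W) :
    MinDegR Γ (nbW Γ W y) (1 - 2/(2*(q:ℝ)-3) + β) := by
  intro w hw
  have hq3 : (3:ℝ) ≤ (q:ℝ) := by exact_mod_cast hq
  have hb : (0:ℝ) < 2*(q:ℝ)-3 := by linarith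
  have ha : (0:ℝ) < 2*(q:ℝ)-1 := by linarith
  have hwW : w ∈ W := nbW_subset Γ W y hw
  have hXY : (nbW Γ (nbW Γ W y) w) = (nbW Γ W w) ∩ (nbW Γ W y) := by
    ext x
    simp only [nbW, Finset.mem_filter, Finset.mem_inter]
    tauto
  have hcap : ((nbW Γ W w).card : ℝ) + ((nbW Γ W y).card:ℝ) - (W.card:ℝ)
      ≤ ((nbW Γ (nbW Γ W y) w).card : ℝ) := by
    rw [hXY]
    have h1 := Finset.card_union_add_card_inter (nbW Γ W w) (nbW Γ W y)
    have h2 : ((nbW Γ W w) ∪ (nbW Γ W y)).card ≤ W.card :=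
      Finset.card_le_card (Finset.union_subset (Finset.filter_subset _ _) (Finset.filter_subset _ _))
    have h1' : (((nbW Γ W w) ∪ (nbW Γ W y)).card:ℝ) + (((nbW Γ W w) ∩ (nbW Γ W y)).card:ℝ)
        = ((nbW Γ W w).card:ℝ) + ((nbW Γ W y).card:ℝ) := by exact_mod_cast congrArg (Nat.cast (R := ℝ)) h1
    have h2' : (((nbW Γ W w) ∪ (nbW Γ W y)).card:ℝ) ≤ (W.card:ℝ) := by exact_mod_cast h2
    linarith
  have hX := H2 w hwW
  have hY := H2 y hy
  have hc : (0:ℝ) ≤ 2/(2*(q:ℝ)-3) - β := by linarith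
  have hWpos : (0:ℝ) ≤ (W.card:ℝ) := by positivity
  have hprod : (2/(2*(q:ℝ)-1) - β) ≤ (2/(2*(q:ℝ)-3) - β) * (1 - 2/(2*(q:ℝ)-1) + β) := by
    have hid : (2/(2*(q:ℝ)-3) - β) * (1 - 2/(2*(q:ℝ)-1) + β) - (2/(2*(q:ℝ)-1) - β)
        = β * (2/(2*(q:ℝ)-1) + 2/(2*(q:ℝ)-3) - β) := by
      field_simp
      ring
    nlinarith [mul_pos hβ (show (0:ℝ) < 2/(2*(q:ℝ)-1) by positivity)]
  have hkey : (2/(2*(q:ℝ)-1) - β) * (W.card:ℝ) ≤ (2/(2*(q:ℝ)-3) - β) * ((nbW Γ W y).card:ℝ) := by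
    calc (2/(2*(q:ℝ)-1) - β) * (W.card:ℝ)
        ≤ ((2/(2*(q:ℝ)-3) - β) * (1 - 2/(2*(q:ℝ)-1) + β)) * (W.card:ℝ) :=
          mul_le_mul_of_nonneg_right hprod hWpos
      _ = (2/(2*(q:ℝ)-3) - β) * ((1 - 2/(2*(q:ℝ)-1) + β) * (W.card:ℝ)) := by ring
      _ ≤ (2/(2*(q:ℝ)-3) - β) * ((nbW Γ W y).card:ℝ) := mul_le_mul_of_nonneg_left hY hc
  have hid1 : (1 - 2/(2*(q:ℝ)-3) + β) * ((nbW Γ W y).card:ℝ)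
      = ((nbW Γ W y).card:ℝ) - (2/(2*(q:ℝ)-3) - β) * ((nbW Γ W y).card:ℝ) := by ring
  have hid2 : (1 - 2/(2*(q:ℝ)-1) + β) * (W.card:ℝ)
      = (W.card:ℝ) - (2/(2*(q:ℝ)-1) - β) * (W.card:ℝ) := by ring
  rw [hid1]
  rw [hid2] at hX
  linarith

lemma base_cnt (W S : Finset V) (hSW : S ⊆ W) (hS : Γ.IsNClique 3 S) {u v : V}
    (hz : (u, v) ∈ S.offDiag) :
    ((cnW Γ W {u, v}).card : ℝ) ≤ (cnt Γ W 3 u v : ℝ) := by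
  obtain ⟨hu, hv, hne⟩ := Finset.mem_offDiag.mp hz
  have hadj : Γ.Adj u v := hS.1 (Finset.mem_coe.mpr hu) (Finset.mem_coe.mpr hv) hne
  have key : (cnW Γ W {u, v}).card ≤ cnt Γ W 3 u v := by
    apply Finset.card_le_card_of_injOn (fun x => insert x {u, v})
    · intro x hx
      obtain ⟨hxW, hxadj⟩ := Finset.mem_filter.mp hx
      have hux : Γ.Adj u x := hxadj u (by simp)
      have hvx : Γ.Adj v x := hxadj v (by simp)
      refine Finset.mem_filter.mpr ⟨Finset.mem_filter.mpr ⟨Finset.mem_powerset.mpr ?_, ?_⟩, ?_, ?_⟩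
      · intro a ha
        simp only [Finset.mem_insert, Finset.mem_singleton] at ha
        rcases ha with rfl | rfl | rfl
        exacts [hxW, hSW hu, hSW hv]
      · rw [SimpleGraph.is3Clique_triple_iff]
        exact ⟨hux.symm, hvx.symm, hadj⟩
      · simp
      · simp
    · intro x hx x' hx' heq
      have hxu : x ≠ u := fun h => (Γ.irrefl (h ▸ ((Finset.mem_filter.mp hx).2 u (by simp))))
      have hxv : x ≠ v := fun h => (Γ.irrefl (h ▸ ((Finset.mem_filter.mp hx).2 v (by simp))))
      have : x ∈ insert x' ({u, v} : Finset V) := by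
        have hx0 : x ∈ insert x ({u, v} : Finset V) := Finset.mem_insert_self x {u, v}
        simpa only [heq] using hx0
      simp only [Finset.mem_insert, Finset.mem_singleton] at this
      tauto
  exact_mod_cast key

lemma offd_lb (d : ℕ) : 2*d ≤ (d*d - d) + 2 := by
  rcases d with _ | _ | n
  · simp
  · simp
  · have h1 : (n+2)*(n+2) - (n+2) = (n+2)*(n+1) := by
      have : (n+2)*(n+2) = (n+2)*(n+1) + (n+2) := by ring
      omega
    rw [h1]
    have h2 : 2*(n+1) ≤ (n+2)*(n+1) := Nat.mul_le_mul_right (n+1) (by omega)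
    omega

lemma base_sum {β : ℝ} (hβ : 0 < β) (W S : Finset V) (hSW : S ⊆ W) (hS : Γ.IsNClique 3 S)
    (H2 : MinDegR Γ W (1 - 2/(2*(3:ℝ)-3) + β)) :
    6 * β * (W.card:ℝ) ≤ ∑ z ∈ S.offDiag, ((cnW Γ W {z.1, z.2}).card : ℝ) := by
  have e1 : ∑ z ∈ S.offDiag, ((cnW Γ W {z.1, z.2}).card)
      = ∑ x ∈ W, ((S.filter (fun a => Γ.Adj a x)).offDiag).card := by
    simp only [cnW, Finset.card_filter]
    rw [Finset.sum_comm]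
    apply Finset.sum_congr rfl
    intro x hx
    rw [← Finset.card_filter]
    congr 1
    ext z
    simp only [Finset.mem_filter, Finset.mem_offDiag, Finset.mem_insert, Finset.mem_singleton]
    constructor
    · rintro ⟨⟨h1, h2, h3⟩, h4⟩
      exact ⟨⟨h1, h4 z.1 (Or.inl rfl)⟩, ⟨h2, h4 z.2 (Or.inr rfl)⟩, h3⟩
    · rintro ⟨⟨h1, h1'⟩, ⟨h2, h2'⟩, h3⟩
      refine ⟨⟨h1, h2, h3⟩, ?_⟩
      rintro a (rfl | rfl) <;> assumption
  have e2 : ∀ x ∈ W, 2 * (((S.filter (fun a => Γ.Adj a x)).card : ℕ):ℝ) - 2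
      ≤ ((((S.filter (fun a => Γ.Adj a x)).offDiag).card : ℕ) : ℝ) := by
    intro x hx
    set d := (S.filter (fun a => Γ.Adj a x)).card with hd
    rw [Finset.offDiag_card, ← hd]
    have := offd_lb d
    have hcast : ((d*d - d : ℕ):ℝ) + 2 ≥ 2*(d:ℝ) := by exact_mod_cast this
    linarith
  have e3 : ∑ x ∈ W, (((S.filter (fun a => Γ.Adj a x)).card : ℕ) : ℝ)
      = ∑ v ∈ S, ((nbW Γ W v).card : ℝ) := by
    exact_mod_cast congrArg (Nat.cast (R := ℝ)) (swap_sum Γ W S)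
  have e7 : 3 * ((1 - 2/(2*(3:ℝ)-3) + β) * (W.card:ℝ)) ≤ ∑ v ∈ S, ((nbW Γ W v).card : ℝ) := by
    have := Finset.sum_le_sum (fun v hv => H2 v (hSW hv))
    rw [Finset.sum_const, hS.2, nsmul_eq_mul] at this
    push_cast at this
    linarith
  have e8 : ∑ x ∈ W, (2 * (((S.filter (fun a => Γ.Adj a x)).card : ℕ):ℝ) - 2)
      ≤ ∑ x ∈ W, ((((S.filter (fun a => Γ.Adj a x)).offDiag).card : ℕ) : ℝ) :=
    Finset.sum_le_sum e2
  have e9 : ∑ x ∈ W, (2 * (((S.filter (fun a => Γ.Adj a x)).card : ℕ):ℝ) - 2)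
      = 2 * (∑ v ∈ S, ((nbW Γ W v).card : ℝ)) - 2 * (W.card:ℝ) := by
    rw [Finset.sum_sub_distrib, ← Finset.mul_sum, e3, Finset.sum_const, nsmul_eq_mul]
    ring
  have e10 : ∑ z ∈ S.offDiag, ((cnW Γ W {z.1, z.2}).card : ℝ)
      = ∑ x ∈ W, ((((S.filter (fun a => Γ.Adj a x)).offDiag).card : ℕ) : ℝ) := by
    exact_mod_cast congrArg (Nat.cast (R := ℝ)) e1
  rw [e10]
  have : (2:ℝ)/(2*(3:ℝ)-3) = 2/3 := by norm_num
  rw [this] at e7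
  linarith


lemma fiber {q : ℕ} (W A : Finset V) (hAW : A ⊆ W) {u v : V}
    (hu : u ∈ A) (hv : v ∈ A) (huv : u ≠ v) :
    ∑ y ∈ cnW Γ W A, cnt Γ (nbW Γ W y) q u v ≤ (q - 1) * cnt Γ W (q+1) u v := by
  simp only [cnt]
  rw [← Finset.card_sigma]
  have hRHS : (((KK Γ W (q+1)).filter (fun T => u ∈ T ∧ v ∈ T)).sigma
      (fun T => (T.erase u).erase v)).card
      = (q - 1) * ((KK Γ W (q+1)).filter (fun T => u ∈ T ∧ v ∈ T)).card := by
    rw [Finset.card_sigma]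
    have hterm : ∀ T ∈ (KK Γ W (q+1)).filter (fun T => u ∈ T ∧ v ∈ T),
        ((T.erase u).erase v).card = q - 1 := by
      intro T hT
      obtain ⟨hTK, hTu, hTv⟩ := Finset.mem_filter.mp hT
      have hcard : T.card = q + 1 := (Finset.mem_filter.mp hTK).2.2
      rw [Finset.card_erase_of_mem (Finset.mem_erase.mpr ⟨huv.symm, hTv⟩),
        Finset.card_erase_of_mem hTu, hcard]
      omega
    rw [Finset.sum_congr rfl hterm, Finset.sum_const, smul_eq_mul, Nat.mul_comm]
  rw [← hRHS]
  apply Finset.card_le_card_of_injOn (fun x => ⟨insert x.1 x.2, x.1⟩)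
  · rintro ⟨y, T⟩ hx
    rw [Finset.mem_coe, Finset.mem_sigma] at hx
    obtain ⟨hy, hT⟩ := hx
    obtain ⟨hyW, hyadj⟩ := Finset.mem_filter.mp hy
    obtain ⟨hTK, hTu, hTv⟩ := Finset.mem_filter.mp hT
    obtain ⟨hTpow, hTcl⟩ := Finset.mem_filter.mp hTK
    have hTsub : T ⊆ nbW Γ W y := Finset.mem_powerset.mp hTpow
    have hyadjT : ∀ b ∈ T, Γ.Adj y b := fun b hb => (Finset.mem_filter.mp (hTsub hb)).2
    have hins : Γ.IsNClique (q+1) (insert y T) := hTcl.insert hyadjT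
    rw [Finset.mem_coe, Finset.mem_sigma]
    constructor
    · refine Finset.mem_filter.mpr ⟨Finset.mem_filter.mpr ⟨Finset.mem_powerset.mpr ?_, hins⟩,
        Finset.mem_insert_of_mem hTu, Finset.mem_insert_of_mem hTv⟩
      exact Finset.insert_subset hyW (hTsub.trans (Finset.filter_subset _ _))
    · refine Finset.mem_erase.mpr ⟨?_, Finset.mem_erase.mpr ⟨?_, Finset.mem_insert_self _ _⟩⟩
      · exact (hyadj v hv).ne'
      · exact (hyadj u hu).ne'
  · rintro ⟨y, T⟩ h1 ⟨y', T'⟩ h2 heq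
    have hy : y = y' := congrArg Sigma.snd heq
    subst hy
    have hins : insert y T = insert y T' := congrArg Sigma.fst heq
    rw [Finset.mem_coe, Finset.mem_sigma] at h1 h2
    have hyT : y ∉ T := by
      intro hmem
      have hTsub : T ⊆ nbW Γ W y :=
        Finset.mem_powerset.mp (Finset.mem_filter.mp (Finset.mem_filter.mp h1.2).1).1
      exact Γ.irrefl ((Finset.mem_filter.mp (hTsub hmem)).2)
    have hyT' : y ∉ T' := by
      intro hmem
      have hTsub : T' ⊆ nbW Γ W y :=
        Finset.mem_powerset.mp (Finset.mem_filter.mp (Finset.mem_filter.mp h2.2).1).1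
      exact Γ.irrefl ((Finset.mem_filter.mp (hTsub hmem)).2)
    have hTT : T = T' := by
      have e1 : (insert y T).erase y = T := Finset.erase_insert hyT
      have e2 : (insert y T').erase y = T' := Finset.erase_insert hyT'
      rw [← e1, ← e2, hins]
    rw [hTT]


lemma main_lemma : ∀ q : ℕ, 3 ≤ q → ∀ β : ℝ, 0 < β → β ≤ 2 / (2*(q:ℝ) - 3) →
    ∀ W S : Finset V, MinDegR Γ W (1 - 2/(2*(q:ℝ)-3) + β) → S ⊆ W → Γ.IsNClique q S →
    cc q * β * ((W.card : ℝ)) ^ (q - 2) ≤ ∑ z ∈ S.offDiag, (cnt Γ W q z.1 z.2 : ℝ) := by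
  intro q hq
  induction q, hq using Nat.le_induction with
  | base =>
      intro β hβ hβ2 W S H2 hSW hS
      have H2' : MinDegR Γ W (1 - 2/(2*(3:ℝ)-3) + β) := by
        have : ((3:ℕ):ℝ) = (3:ℝ) := by norm_num
        rwa [this] at H2
      have hb := base_sum Γ hβ W S hSW hS H2'
      have hW : (0:ℝ) ≤ (W.card:ℝ) := by positivity
      have hstep : ∑ z ∈ S.offDiag, ((cnW Γ W {z.1, z.2}).card : ℝ)
          ≤ ∑ z ∈ S.offDiag, (cnt Γ W 3 z.1 z.2 : ℝ) := by
        apply Finset.sum_le_sum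
        intro z hz
        exact base_cnt Γ W S hSW hS (by simpa using hz)
      calc cc 3 * β * (W.card:ℝ)^(3-2) = 3*β*(W.card:ℝ) := by rw [cc_three]; norm_num
        _ ≤ 6*β*(W.card:ℝ) := by nlinarith
        _ ≤ ∑ z ∈ S.offDiag, ((cnW Γ W {z.1, z.2}).card : ℝ) := hb
        _ ≤ ∑ z ∈ S.offDiag, (cnt Γ W 3 z.1 z.2 : ℝ) := hstep
  | succ q hq ih =>
      intro β hβ hβ2 W S H2 hSW hS
      have hcast : (2*(((q+1):ℕ):ℝ)-3) = 2*(q:ℝ)-1 := by push_cast; ring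
      rw [hcast] at hβ2 H2
      have hq3 : (3:ℝ) ≤ (q:ℝ) := by exact_mod_cast hq
      have hbb : (0:ℝ) < 2*(q:ℝ)-3 := by linarith
      have haa : (0:ℝ) < 2*(q:ℝ)-1 := by linarith
      have hW : (0:ℝ) ≤ (W.card:ℝ) := by positivity
      have hβ2' : β ≤ 2/(2*(q:ℝ)-3) := by
        refine le_trans hβ2 ?_
        apply div_le_div_of_nonneg_left (by norm_num) hbb (by linarith)
      set δ0 : ℝ := (1 - 2/(2*(q:ℝ)-1) + β) * (W.card:ℝ) with hδ0
      have hmin : ∀ v ∈ S, δ0 ≤ ((nbW Γ W v).card : ℝ) := fun v hv => H2 v (hSW hv)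
      obtain ⟨A, hApc, hAlb⟩ := claim1 Γ (by omega : 1 ≤ q) W S hSW hS hmin
      obtain ⟨hAS, hAcard⟩ := Finset.mem_powersetCard.mp hApc
      have hAclique : Γ.IsNClique q A := ⟨hS.1.subset (Finset.coe_subset.mpr hAS), hAcard⟩
      set η : ℝ := (2*(q:ℝ)-4)/(((q:ℝ)+1)*(2*(q:ℝ)-1)) with hη
      have hηnn : 0 ≤ η := by
        rw [hη]
        apply div_nonneg (by linarith)
        have : (0:ℝ) < (q:ℝ)+1 := by linarith
        positivity
      have hAcn : η * (W.card:ℝ) ≤ ((cnW Γ W A).card:ℝ) := by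
        refine le_trans ?_ hAlb
        rw [hδ0, le_div_iff₀ (by positivity : (0:ℝ) < (q:ℝ)+1)]
        have hsc : η * ((q:ℝ)+1) ≤ ((q:ℝ)+1)*(1-2/(2*(q:ℝ)-1)+β) - ((q:ℝ)-1) := by
          have hid : ((q:ℝ)+1)*(1-2/(2*(q:ℝ)-1)) - ((q:ℝ)-1) = η * ((q:ℝ)+1) := by
            rw [hη, div_mul_eq_mul_div, eq_div_iff (by positivity), div_eq_mul_inv]
            linear_combination (-2*((q:ℝ)+1)*((q:ℝ)+1)) * mul_inv_cancel₀ haa.ne'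
          nlinarith
        calc η * (W.card:ℝ) * ((q:ℝ)+1) = (η * ((q:ℝ)+1)) * (W.card:ℝ) := by ring
          _ ≤ (((q:ℝ)+1)*(1-2/(2*(q:ℝ)-1)+β) - ((q:ℝ)-1)) * (W.card:ℝ) :=
              mul_le_mul_of_nonneg_right hsc hW
          _ = ((q:ℝ)+1) * ((1 - 2/(2*(q:ℝ)-1) + β) * (W.card:ℝ)) - ((q:ℝ)-1) * (W.card:ℝ) := by
              ring
      set Y := cnW Γ W A with hYdef
      set κ : ℝ := (2*(q:ℝ)-3)/(2*(q:ℝ)-1) with hκ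
      have hκnn : (0:ℝ) ≤ κ := by rw [hκ]; positivity
      have key1 : ∀ y ∈ Y, cc q * β * (κ * (W.card:ℝ))^(q-2)
          ≤ ∑ z ∈ A.offDiag, (cnt Γ (nbW Γ W y) q z.1 z.2 : ℝ) := by
        intro y hy
        have hyW : y ∈ W := cnW_subset Γ W A hy
        have hyadj : ∀ a ∈ A, Γ.Adj a y := (Finset.mem_filter.mp hy).2
        have hAW' : A ⊆ nbW Γ W y := by
          intro a ha
          exact Finset.mem_filter.mpr ⟨hSW (hAS ha), (hyadj a ha).symm⟩
        have H2' := descent Γ hq hβ hβ2' W H2 hyW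
        have hIH := ih β hβ hβ2' (nbW Γ W y) A H2' hAW' hAclique
        refine le_trans ?_ hIH
        have hκ1 : κ ≤ 1 - 2/(2*(q:ℝ)-1) + β := by
          have : κ = 1 - 2/(2*(q:ℝ)-1) := by rw [hκ]; field_simp; ring
          linarith
        have h1 : κ * (W.card:ℝ) ≤ ((nbW Γ W y).card : ℝ) :=
          le_trans (mul_le_mul_of_nonneg_right hκ1 hW) (H2 y hyW)
        have h2 := pow_le_pow_left₀ (mul_nonneg hκnn hW) h1 (q-2)
        exact mul_le_mul_of_nonneg_left h2 (mul_nonneg (cc_pos q).le hβ.le)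
      have key2 : (Y.card:ℝ) * (cc q * β * (κ*(W.card:ℝ))^(q-2))
          ≤ ∑ y ∈ Y, ∑ z ∈ A.offDiag, (cnt Γ (nbW Γ W y) q z.1 z.2 : ℝ) := by
        have := Finset.sum_le_sum key1
        rwa [Finset.sum_const, nsmul_eq_mul] at this
      have key3 : ∑ y ∈ Y, ∑ z ∈ A.offDiag, (cnt Γ (nbW Γ W y) q z.1 z.2 : ℝ)
          ≤ ((q:ℝ)-1) * ∑ z ∈ A.offDiag, (cnt Γ W (q+1) z.1 z.2 : ℝ) := by
        rw [Finset.sum_comm, Finset.mul_sum]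
        apply Finset.sum_le_sum
        intro z hz
        obtain ⟨hz1, hz2, hzne⟩ := Finset.mem_offDiag.mp hz
        have hf := fiber Γ (q := q) W A (fun a ha => hSW (hAS ha)) hz1 hz2 hzne
        have hcast1 : ((q-1:ℕ):ℝ) = (q:ℝ)-1 := by
          rw [Nat.cast_sub (by omega : 1 ≤ q)]; norm_num
        calc ∑ y ∈ Y, (cnt Γ (nbW Γ W y) q z.1 z.2 : ℝ)
            = ((∑ y ∈ Y, cnt Γ (nbW Γ W y) q z.1 z.2 : ℕ) : ℝ) := by push_cast; rfl
          _ ≤ (((q-1) * cnt Γ W (q+1) z.1 z.2 : ℕ):ℝ) := by exact_mod_cast hf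
          _ = ((q:ℝ)-1) * (cnt Γ W (q+1) z.1 z.2 : ℝ) := by
              rw [Nat.cast_mul, hcast1]
      have hccβ : (0:ℝ) ≤ cc q * β * (κ*(W.card:ℝ))^(q-2) := by
        have := cc_pos q
        positivity
      have key4 : η * (W.card:ℝ) * (cc q * β * (κ*(W.card:ℝ))^(q-2))
          ≤ ((q:ℝ)-1) * ∑ z ∈ A.offDiag, (cnt Γ W (q+1) z.1 z.2 : ℝ) :=
        le_trans (mul_le_mul_of_nonneg_right hAcn hccβ) (le_trans key2 key3)
      have hnum : ((q:ℝ)-1) * (cc (q+1) * β * (W.card:ℝ)^(q-1))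
          ≤ η * (W.card:ℝ) * (cc q * β * (κ*(W.card:ℝ))^(q-2)) := by
        rw [mul_pow]
        have hpow : (W.card:ℝ)^(q-1) = (W.card:ℝ)^(q-2) * (W.card:ℝ) := by
          rw [← pow_succ]
          congr 1
          omega
        rw [hpow]
        have hsc : ((q:ℝ)-1) * cc (q+1) ≤ η * κ^(q-2) * cc q := by
          have h13 := kappa_pow hq
          have hstep := step_const hq
          have hccq := (cc_pos q).le
          calc ((q:ℝ)-1) * cc (q+1) = cc (q+1) * ((q:ℝ)-1) := by ring
            _ ≤ (2 * (q:ℝ) - 4) / (((q:ℝ) + 1) * (2 * (q:ℝ) - 1)) * (1/3) * cc q := hstep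
            _ = (η * (1/3)) * cc q := by rw [hη]
            _ ≤ (η * κ^(q-2)) * cc q := by
                apply mul_le_mul_of_nonneg_right _ hccq
                apply mul_le_mul_of_nonneg_left _ hηnn
                exact h13
            _ = η * κ^(q-2) * cc q := by ring
        calc ((q:ℝ)-1) * (cc (q+1) * β * ((W.card:ℝ)^(q-2) * (W.card:ℝ)))
            = (((q:ℝ)-1) * cc (q+1)) * (β * ((W.card:ℝ)^(q-2) * (W.card:ℝ))) := by ring
          _ ≤ (η * κ^(q-2) * cc q) * (β * ((W.card:ℝ)^(q-2) * (W.card:ℝ))) :=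
              mul_le_mul_of_nonneg_right hsc (by positivity)
          _ = η * (W.card:ℝ) * (cc q * β * (κ^(q-2) * (W.card:ℝ)^(q-2))) := by ring
      have hq1pos : (0:ℝ) < (q:ℝ)-1 := by linarith
      have key5 : cc (q+1) * β * (W.card:ℝ)^(q-1)
          ≤ ∑ z ∈ A.offDiag, (cnt Γ W (q+1) z.1 z.2 : ℝ) :=
        le_of_mul_le_mul_left (le_trans hnum key4) hq1pos
      have hsub : A.offDiag ⊆ S.offDiag := by
        intro z hz
        obtain ⟨h1,h2,h3⟩ := Finset.mem_offDiag.mp hz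
        exact Finset.mem_offDiag.mpr ⟨hAS h1, hAS h2, h3⟩
      have key6 : ∑ z ∈ A.offDiag, (cnt Γ W (q+1) z.1 z.2 : ℝ)
          ≤ ∑ z ∈ S.offDiag, (cnt Γ W (q+1) z.1 z.2 : ℝ) :=
        Finset.sum_le_sum_of_subset_of_nonneg hsub (fun _ _ _ => by positivity)
      have hexp : q + 1 - 2 = q - 1 := by omega
      rw [hexp]
      exact le_trans key5 key6


lemma frac_lemma (p : ℕ) (hp : 3 ≤ p) :
    ((10*(p:ℝ))^(2*p))⁻¹ * ((p:ℝ)*(p:ℝ)-(p:ℝ)) ≤ cc p / ((p:ℝ)*((p:ℝ)-1)) := by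
  have hp3 : (3:ℝ) ≤ (p:ℝ) := by exact_mod_cast hp
  have hP10 : (0:ℝ) < (10*(p:ℝ))^(2*p) := by positivity
  have hpp1 : (0:ℝ) < (p:ℝ)*((p:ℝ)-1) := mul_pos (by linarith) (by linarith)
  rw [inv_mul_eq_div, div_le_div_iff₀ hP10 hpp1]
  have hcb := cc_bound p hp
  nlinarith [hcb, hp3, pow_pos (by positivity : (0:ℝ) < 10*(p:ℝ)) (2*p), cc_pos p]

lemma degCount_eq (v : V) : degCount Γ v = (nbW Γ Finset.univ v).card := by
  have h : (Γ.neighborSet v).toFinset = nbW Γ Finset.univ v := by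
    ext x
    simp [nbW, SimpleGraph.mem_neighborSet, Set.mem_toFinset]
  rw [degCount, Set.ncard_eq_toFinset_card', h]

lemma cliqueCount_eq (p : ℕ) : cliqueCount Γ p = (KK Γ Finset.univ p).card := by
  have h : {s : Finset V | Γ.IsNClique p s}.toFinset = KK Γ Finset.univ p := by
    ext T
    simp [KK, Set.mem_toFinset, Finset.subset_univ]
  rw [cliqueCount, Set.ncard_eq_toFinset_card', h]

lemma double_count (p : ℕ) :
    ∑ z ∈ (Finset.univ : Finset V).offDiag, (cnt Γ Finset.univ p z.1 z.2)
      = ∑ T ∈ KK Γ Finset.univ p, (T.offDiag).card := by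
  simp only [cnt, Finset.card_filter]
  rw [Finset.sum_comm]
  apply Finset.sum_congr rfl
  intro T hT
  rw [← Finset.card_filter]
  congr 1
  ext z
  simp only [Finset.mem_filter, Finset.mem_offDiag, Finset.mem_univ, true_and]
  tauto

end CFW

theorem high_min_degree_removal (p : ℕ) (hp : 3 ≤ p) (β lam : ℝ) (hβ : 0 < β) (hlam : 0 < lam)
    (m : ℕ) (Γ : SimpleGraph (Fin m))
    (hdeg : ∀ v, (1 - 2 / (2 * (p : ℝ) - 3) + β) * m ≤ (degCount Γ v : ℝ))
    (hcliques : (cliqueCount Γ p : ℝ) ≤ ((10 * (p : ℝ)) ^ (2 * p))⁻¹ * β * lam * (m : ℝ) ^ p) :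
    ∃ E : Set (Sym2 (Fin m)), E ⊆ Γ.edgeSet ∧ (E.ncard : ℝ) ≤ lam * (m : ℝ) ^ 2 ∧
      (Γ.deleteEdges E).CliqueFree p := by
  classical
  rcases Nat.eq_zero_or_pos m with hm0 | hm
  · subst hm0
    refine ⟨∅, by simp, by simp, ?_⟩
    intro t ht
    have h1 : t.card = p := ht.2
    have h2 : t.card ≤ Fintype.card (Fin 0) := Finset.card_le_univ t
    rw [Fintype.card_fin] at h2
    omega
  -- main case : m ≥ 1
  have hp3 : (3:ℝ) ≤ (p:ℝ) := by exact_mod_cast hp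
  have hb3 : (0:ℝ) < 2*(p:ℝ)-3 := by linarith
  have hmpos : (0:ℝ) < (m:ℝ) := by exact_mod_cast hm
  -- degCount bound gives β ≤ 2/(2p−3)
  have hdegle : ∀ v : Fin m, (degCount Γ v : ℝ) ≤ (m:ℝ) - 1 := by
    intro v
    have hsub : nbW Γ Finset.univ v ⊆ Finset.univ.erase v := by
      intro x hx
      exact Finset.mem_erase.mpr ⟨((Finset.mem_filter.mp hx).2).ne', Finset.mem_univ x⟩
    have h1 : (nbW Γ Finset.univ v).card ≤ m - 1 := by
      calc (nbW Γ Finset.univ v).card ≤ (Finset.univ.erase v).card := Finset.card_le_card hsub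
        _ = m - 1 := by rw [Finset.card_erase_of_mem (Finset.mem_univ v)]; simp
    rw [degCount_eq]
    have : ((m - 1 : ℕ) : ℝ) = (m:ℝ) - 1 := by
      rw [Nat.cast_sub hm]; norm_num
    rw [← this]
    exact_mod_cast h1
  have hβ2 : β ≤ 2/(2*(p:ℝ)-3) := by
    by_contra hcon
    push_neg at hcon
    have hv := hdeg ⟨0, hm⟩
    have hvle := hdegle ⟨0, hm⟩
    have hgt : (1 - 2 / (2 * (p : ℝ) - 3) + β) * m - (m:ℝ) > 0 := by
      have : (1 - 2 / (2 * (p : ℝ) - 3) + β) * m - (m:ℝ) = (β - 2/(2*(p:ℝ)-3)) * m := by ring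
      rw [this]
      apply mul_pos (by linarith) hmpos
    linarith
  -- min degree hypothesis in MinDegR form
  have hcard_univ : (((Finset.univ : Finset (Fin m))).card : ℝ) = (m:ℝ) := by simp
  have H2univ : MinDegR Γ Finset.univ (1 - 2/(2*(p:ℝ)-3) + β) := by
    intro w hw
    rw [hcard_univ]
    have := hdeg w
    rwa [degCount_eq, Nat.cast_inj.mpr rfl] at this
  -- the richness threshold
  set Qv : ℝ := cc p * β * (m:ℝ)^(p-2) / ((p:ℝ)*((p:ℝ)-1)) with hQv
  have hQpos : 0 < Qv := by
    rw [hQv]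
    have h1 := cc_pos p
    have h2 : (0:ℝ) < (p:ℝ)*((p:ℝ)-1) := mul_pos (by linarith) (by linarith)
    positivity
  set RichP : Finset (Fin m × Fin m) :=
    (Finset.univ : Finset (Fin m)).offDiag.filter
      (fun z => Qv ≤ (cnt Γ Finset.univ p z.1 z.2 : ℝ)) with hRichP
  set Ef : Finset (Sym2 (Fin m)) := RichP.image (fun z => s(z.1, z.2)) with hEf
  set E : Set (Sym2 (Fin m)) :=
    {e | e ∈ Γ.edgeSet ∧ ∃ z : Fin m × Fin m, e = s(z.1, z.2) ∧
      Qv ≤ (cnt Γ Finset.univ p z.1 z.2 : ℝ)} with hE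
  have hEsubEdge : E ⊆ Γ.edgeSet := fun e he => he.1
  have hEsubEf : E ⊆ (Ef : Set (Sym2 (Fin m))) := by
    intro e he
    obtain ⟨hedge, z, hez, hrich⟩ := he
    have hadj : Γ.Adj z.1 z.2 := by
      rw [hez] at hedge
      exact (SimpleGraph.mem_edgeSet Γ).mp hedge
    have hzmem : z ∈ (Finset.univ : Finset (Fin m)).offDiag :=
      Finset.mem_offDiag.mpr ⟨Finset.mem_univ _, Finset.mem_univ _, hadj.ne⟩
    rw [Finset.mem_coe, hEf]
    apply Finset.mem_image.mpr
    refine ⟨z, ?_, hez.symm⟩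
    rw [hRichP]
    exact Finset.mem_filter.mpr ⟨hzmem, hrich⟩
  refine ⟨E, hEsubEdge, ?_, ?_⟩
  · -- cardinality bound
    have hE1 : (E.ncard : ℝ) ≤ (Ef.card : ℝ) := by
      have := Set.ncard_le_ncard hEsubEf (Ef.finite_toSet)
      rw [Set.ncard_coe_finset] at this
      exact_mod_cast this
    have hE2 : (Ef.card : ℝ) ≤ (RichP.card : ℝ) := by
      exact_mod_cast Finset.card_image_le
    -- double counting
    have hsum1 : (RichP.card : ℝ) * Qv ≤
        ∑ z ∈ (Finset.univ : Finset (Fin m)).offDiag, (cnt Γ Finset.univ p z.1 z.2 : ℝ) := by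
      have h1 : (RichP.card : ℝ) * Qv = ∑ _z ∈ RichP, Qv := by
        rw [Finset.sum_const, nsmul_eq_mul]
      rw [h1]
      have h2 : ∑ z ∈ RichP, Qv ≤ ∑ z ∈ RichP, (cnt Γ Finset.univ p z.1 z.2 : ℝ) := by
        apply Finset.sum_le_sum
        intro z hz
        exact (Finset.mem_filter.mp hz).2
      refine le_trans h2 ?_
      apply Finset.sum_le_sum_of_subset_of_nonneg (Finset.filter_subset _ _)
      intro z _ _
      positivity
    have hsum2 : ∑ z ∈ (Finset.univ : Finset (Fin m)).offDiag, (cnt Γ Finset.univ p z.1 z.2 : ℝ)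
        = ((KK Γ Finset.univ p).card : ℝ) * ((p:ℝ)*(p:ℝ) - (p:ℝ)) := by
      have h1 := double_count Γ p
      have h2 : ∑ T ∈ KK Γ Finset.univ p, (T.offDiag).card
          = (KK Γ Finset.univ p).card * (p*p - p) := by
        rw [Finset.sum_congr rfl (fun T hT => ?_), Finset.sum_const, smul_eq_mul]
        have hcard : T.card = p := (Finset.mem_filter.mp hT).2.2
        rw [Finset.offDiag_card, hcard]
      have h3 : ((p*p - p : ℕ):ℝ) = (p:ℝ)*(p:ℝ) - (p:ℝ) := by
        rw [Nat.cast_sub (Nat.le_mul_of_pos_left p (by omega))]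
        push_cast
        ring
      calc ∑ z ∈ (Finset.univ : Finset (Fin m)).offDiag, (cnt Γ Finset.univ p z.1 z.2 : ℝ)
          = ((∑ z ∈ (Finset.univ : Finset (Fin m)).offDiag, cnt Γ Finset.univ p z.1 z.2 : ℕ) : ℝ) := by
            push_cast; rfl
        _ = (((KK Γ Finset.univ p).card * (p*p - p) : ℕ) : ℝ) := by rw [h1, h2]
        _ = ((KK Γ Finset.univ p).card : ℝ) * ((p:ℝ)*(p:ℝ) - (p:ℝ)) := by
            rw [Nat.cast_mul, h3]
    -- clique count bound
    have hKp : ((KK Γ Finset.univ p).card : ℝ)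
        ≤ ((10 * (p : ℝ)) ^ (2 * p))⁻¹ * β * lam * (m : ℝ) ^ p := by
      rw [← cliqueCount_eq]
      exact hcliques
    have hppn : (0:ℝ) ≤ (p:ℝ)*(p:ℝ) - (p:ℝ) := by nlinarith [hp3]
    have hP10 : (0:ℝ) < (10*(p:ℝ))^(2*p) := by positivity
    have hpp1 : (0:ℝ) < (p:ℝ)*((p:ℝ)-1) := mul_pos (by linarith) (by linarith)
    have hfrac := frac_lemma p hp
    have hmp : (m:ℝ)^(p-2)*(m:ℝ)^2 = (m:ℝ)^p := by
      rw [← pow_add]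
      congr 1
      omega
    have hQlam : Qv * (lam * (m:ℝ)^2) = cc p * β * lam * (m:ℝ)^p / ((p:ℝ)*((p:ℝ)-1)) := by
      rw [hQv, div_mul_eq_mul_div]
      congr 1
      rw [← hmp]
      ring
    have hchain : ((KK Γ Finset.univ p).card : ℝ) * ((p:ℝ)*(p:ℝ) - (p:ℝ)) ≤ Qv * (lam * (m:ℝ)^2) := by
      calc ((KK Γ Finset.univ p).card : ℝ) * ((p:ℝ)*(p:ℝ) - (p:ℝ))
          ≤ (((10 * (p : ℝ)) ^ (2 * p))⁻¹ * β * lam * (m : ℝ) ^ p) * ((p:ℝ)*(p:ℝ) - (p:ℝ)) :=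
            mul_le_mul_of_nonneg_right hKp hppn
        _ = (β * lam * (m:ℝ)^p) * (((10*(p:ℝ))^(2*p))⁻¹ * ((p:ℝ)*(p:ℝ)-(p:ℝ))) := by ring
        _ ≤ (β * lam * (m:ℝ)^p) * (cc p / ((p:ℝ)*((p:ℝ)-1))) := by
            apply mul_le_mul_of_nonneg_left hfrac
            positivity
        _ = cc p * β * lam * (m:ℝ)^p / ((p:ℝ)*((p:ℝ)-1)) := by ring
        _ = Qv * (lam * (m:ℝ)^2) := hQlam.symm
    have hRichle : (RichP.card : ℝ) ≤ lam * (m:ℝ)^2 := by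
      have h := le_trans hsum1 (le_of_eq hsum2)
      have h2 := le_trans h hchain
      -- card * Qv ≤ Qv * (lam m²)
      have h3 : (RichP.card : ℝ) * Qv ≤ (lam * (m:ℝ)^2) * Qv := by
        calc (RichP.card : ℝ) * Qv ≤ Qv * (lam * (m:ℝ)^2) := h2
          _ = (lam * (m:ℝ)^2) * Qv := by ring
      exact le_of_mul_le_mul_right h3 hQpos
    linarith
  · -- clique-freeness
    intro t ht
    have htΓ : Γ.IsNClique p t := ht.mono (SimpleGraph.deleteEdges_le E)
    have hmain := main_lemma Γ p hp β hβ hβ2 Finset.univ t H2univ (Finset.subset_univ t) htΓ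
    rw [hcard_univ] at hmain
    -- pigeonhole
    have hoffcard : (t.offDiag).card = p*p - p := by
      rw [Finset.offDiag_card, htΓ.2]
    have hoffne : (t.offDiag).Nonempty := by
      rw [← Finset.card_pos, hoffcard]
      have h1 : p*3 ≤ p*p := Nat.mul_le_mul_left p hp
      omega
    have hex : ∃ z ∈ t.offDiag, Qv ≤ (cnt Γ Finset.univ p z.1 z.2 : ℝ) := by
      by_contra hcon
      push_neg at hcon
      have hlt := Finset.sum_lt_sum_of_nonempty hoffne hcon
      rw [Finset.sum_const, nsmul_eq_mul, hoffcard] at hlt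
      have h3 : ((p*p - p : ℕ):ℝ) = (p:ℝ)*(p:ℝ) - (p:ℝ) := by
        rw [Nat.cast_sub (Nat.le_mul_of_pos_left p (by omega))]
        push_cast
        ring
      rw [h3, hQv] at hlt
      have hpp1 : (0:ℝ) < (p:ℝ)*((p:ℝ)-1) := mul_pos (by linarith) (by linarith)
      have heq : ((p:ℝ)*(p:ℝ) - (p:ℝ)) * (cc p * β * (m:ℝ)^(p-2) / ((p:ℝ)*((p:ℝ)-1)))
          = cc p * β * (m:ℝ)^(p-2) := by
        rw [div_eq_mul_inv]
        have : ((p:ℝ)*(p:ℝ) - (p:ℝ)) = (p:ℝ)*((p:ℝ)-1) := by ring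
        rw [this]
        field_simp
        exact mul_div_cancel_left₀ _ (by linarith : (p:ℝ) - 1 ≠ 0)
      rw [heq] at hlt
      linarith
    obtain ⟨z, hzt, hzrich⟩ := hex
    obtain ⟨hz1, hz2, hzne⟩ := Finset.mem_offDiag.mp hzt
    have hadjΓ : Γ.Adj z.1 z.2 := htΓ.1 (Finset.mem_coe.mpr hz1) (Finset.mem_coe.mpr hz2) hzne
    have hinE : s(z.1, z.2) ∈ E := by
      rw [hE]
      exact ⟨(SimpleGraph.mem_edgeSet Γ).mpr hadjΓ, z, rfl, hzrich⟩
    have hadjD : (Γ.deleteEdges E).Adj z.1 z.2 :=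
      ht.1 (Finset.mem_coe.mpr hz1) (Finset.mem_coe.mpr hz2) hzne
    rw [SimpleGraph.deleteEdges_adj] at hadjD
    exact hadjD.2 hinE
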